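/- Define on the set D = {(x, y, z, α₁, α₂, α₃, α₄, α₅) ∈ ℂ³ × ℂ⁵ : y ≠ α₅} the maps S(x,y,z;α₁,…,α₅) = (x − √−1(α₂−α₄)/(2(y−α₅)), y, [4y²z − 8α₅yz + 4√−1(α₂−α₄)xy − 4√−1(α₂−α₄)α₅x − 2(α₁−α₃)(α₂−α₄)y + 4α₅²z + (α₂−α₄)(α₂−α₄+2(α₁−α₃)α₅)]/(4(y−α₅)²); α₁, α₄, α₃, α₂, α₅) and Π(x,y,z;α₁,…,α₅) = (x, −y, z; −α₃, α₄, −α₁, α₂, −α₅). Then S and Π map D into D, and S∘S = id, Π∘Π = id, and (S∘Π)∘(S∘Π) = id on D. -/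

import Mathlib

open Complex

noncomputable section

/-- Points `(x, y, z; α₁, α₂, α₃, α₄, α₅)` of `ℂ³ × ℂ⁵`. -/
abbrev Pt : Type := (ℂ × ℂ × ℂ) × (ℂ × ℂ × ℂ × ℂ × ℂ)

/-- The domain `D = {y ≠ α₅}`. -/
def Dom : Set Pt := {q | q.1.2.1 ≠ q.2.2.2.2.2}

/-- The Bäcklund transformation `s` acting on variables and parameters. -/
def Smap : Pt → Pt := fun q =>
  let x := q.1.1; let y := q.1.2.1; let z := q.1.2.2
  let α₁ := q.2.1; let α₂ := q.2.2.1; let α₃ := q.2.2.2.1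
  let α₄ := q.2.2.2.2.1; let α₅ := q.2.2.2.2.2
  ((x - I * (α₂ - α₄) / (2 * (y - α₅)), y,
    (4 * y ^ 2 * z - 8 * α₅ * y * z + 4 * I * (α₂ - α₄) * x * y
      - 4 * I * (α₂ - α₄) * α₅ * x - 2 * (α₁ - α₃) * (α₂ - α₄) * y
      + 4 * α₅ ^ 2 * z
      + (α₂ - α₄) * (α₂ - α₄ + 2 * (α₁ - α₃) * α₅)) / (4 * (y - α₅) ^ 2)),
   (α₁, α₄, α₃, α₂, α₅))

/-- The transformation `π` acting on variables and parameters. -/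
def Pmap : Pt → Pt := fun q =>
  ((q.1.1, -q.1.2.1, q.1.2.2),
   (-q.2.2.2.1, q.2.2.2.2.1, -q.2.1, q.2.2.1, -q.2.2.2.2.2))

set_option maxHeartbeats 2000000 in
lemma keyS (x u z a1 a2 a3 a4 a5 : ℂ) (h : u ≠ 0) :
    Smap (Smap ((x,u+a5,z),(a1,a2,a3,a4,a5))) = ((x,u+a5,z),(a1,a2,a3,a4,a5)) := by
  have h2 : (4:ℂ) * u ^ 2 ≠ 0 := mul_ne_zero (by norm_num) (pow_ne_zero _ h)
  simp only [Smap, Prod.mk.injEq, and_true, true_and, eq_self_iff_true, add_sub_cancel_right]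
  refine ⟨by field_simp; ring, ?_⟩
  rw [div_eq_iff h2]
  field_simp
  ring_nf
  rw [I_sq]
  field_simp
  have h24 : u ^ 24 * u⁻¹ ^ 24 = (1:ℂ) := by
    rw [← mul_pow, mul_inv_cancel₀ h, one_pow]
  have h48 : u ^ 48 * u⁻¹ ^ 48 = (1:ℂ) := by
    rw [← mul_pow, mul_inv_cancel₀ h, one_pow]
  linear_combination

set_option maxHeartbeats 2000000 in
lemma keyPS (x u z a1 a2 a3 a4 a5 : ℂ) (h : u ≠ 0) :
    Smap (Pmap (Smap (Pmap ((x,u+a5,z),(a1,a2,a3,a4,a5))))) = ((x,u+a5,z),(a1,a2,a3,a4,a5)) := by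
  have h2 : (4:ℂ) * u ^ 2 ≠ 0 := mul_ne_zero (by norm_num) (pow_ne_zero _ h)
  simp only [Smap, Pmap, Prod.mk.injEq, neg_neg, and_true, true_and, eq_self_iff_true,
    add_sub_cancel_right, neg_add_rev, neg_sub]
  refine ⟨by field_simp; linear_combination (I*a4 - I*a2) * mul_inv_cancel₀ h, ?_⟩
  rw [div_eq_iff h2]
  field_simp
  ring_nf
  rw [I_sq]
  field_simp
  have h24 : u ^ 24 * u⁻¹ ^ 24 = (1:ℂ) := by
    rw [← mul_pow, mul_inv_cancel₀ h, one_pow]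
  have h48 : u ^ 48 * u⁻¹ ^ 48 = (1:ℂ) := by
    rw [← mul_pow, mul_inv_cancel₀ h, one_pow]
  linear_combination

theorem stmt11 :
    (∀ q ∈ Dom, Smap q ∈ Dom) ∧
    (∀ q ∈ Dom, Pmap q ∈ Dom) ∧
    (∀ q ∈ Dom, Smap (Smap q) = q) ∧
    (∀ q ∈ Dom, Pmap (Pmap q) = q) ∧
    (∀ q ∈ Dom, Smap (Pmap (Smap (Pmap q))) = q) := by
  refine ⟨fun q hq => hq, fun q hq => fun hc => hq (by
      simpa using neg_injective hc), ?_, ?_, ?_⟩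
  · rintro ⟨⟨x, y, z⟩, a1, a2, a3, a4, a5⟩ hq
    have h : y - a5 ≠ 0 := sub_ne_zero.mpr hq
    have := keyS x (y - a5) z a1 a2 a3 a4 a5 h
    rwa [sub_add_cancel] at this
  · rintro ⟨⟨x, y, z⟩, a1, a2, a3, a4, a5⟩ _
    simp [Pmap]
  · rintro ⟨⟨x, y, z⟩, a1, a2, a3, a4, a5⟩ hq
    have h : y - a5 ≠ 0 := sub_ne_zero.mpr hq
    have := keyPS x (y - a5) z a1 a2 a3 a4 a5 h
    rwa [sub_add_cancel] at this
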